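/- Let L : C^op → Cat be an extensive strictly indexed category (i.e., for each W, X the canonical functor (L(ι_W), L(ι_X)) : L(W ⊔ X) → L(W) × L(X) is an isomorphism), and suppose each fibre L(X) has an initial object 0. Then for any W, X in C there is an adjunction ε^{(W,X)} ∘ (id_{L(W)}, 0) ⊣ L(ι_W) : L(W ⊔ X) → L(W), where ε^{(W,X)} is the inverse of the extensivity isomorphism and 0 : L(W) → L(X) is the constant functor at the initial object. -/

import Mathlib

/-!
Let `L : Cᵒᵖ ⥤ Cat` be an extensive strictly indexed category (i.e., for each `W, X` the
canonical functor `(L(ι_W), L(ι_X)) : L(W ⊔ X) ⥤ L(W) × L(X)` is an isomorphism), and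
suppose each fibre `L(X)` has an initial object `0`.  Then for any `W, X` in `C` there is an
adjunction `ε^{(W,X)} ∘ (id_{L(W)}, 0) ⊣ L(ι_W) : L(W ⊔ X) ⥤ L(W)`, where `ε^{(W,X)}` is the
inverse of the extensivity isomorphism and `0 : L(W) ⥤ L(X)` is the constant functor at the
initial object.
-/

universe w₂ w₁ v u

open CategoryTheory CategoryTheory.Limits Opposite

/-- The pairing of the identity with the constant functor at the initial object is left
adjoint to the first projection. -/
noncomputable def prodInitialAdjFst (A : Type*) [Category A] (B : Type*) [Category B]
    [HasInitial B] :
    (Functor.prod' (𝟭 A) ((Functor.const A).obj (⊥_ B))) ⊣ CategoryTheory.Prod.fst A B :=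
  Adjunction.mkOfHomEquiv
    { homEquiv := fun a p =>
        { toFun := fun f => f.1
          invFun := fun g => (g, initial.to p.2)
          left_inv := fun f => by
            apply Prod.ext
            · rfl
            · exact initial.hom_ext _ _
          right_inv := fun g => rfl }
      homEquiv_naturality_left_symm := fun f g => by
        apply Prod.ext
        · rfl
        · exact initial.hom_ext _ _
      homEquiv_naturality_right := fun f g => rfl }

theorem extensive_indexed_category_coprojection_adjunction
    {C : Type u} [Category.{v} C] [HasBinaryCoproducts C] (L : Cᵒᵖ ⥤ Cat.{w₂, w₁})
    [∀ X : Cᵒᵖ, HasInitial (L.obj X)]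
    -- extensivity: `ε W X` is a (strict) inverse to the canonical pairing functor
    (ε : ∀ W X : C, (↑(L.obj (op W)) × ↑(L.obj (op X))) ⥤ L.obj (op (W ⨿ X)))
    (hε₁ : ∀ W X : C, ε W X ⋙
      Functor.prod' (L.map (coprod.inl : W ⟶ W ⨿ X).op).toFunctor (L.map (coprod.inr : X ⟶ W ⨿ X).op).toFunctor =
        𝟭 (↑(L.obj (op W)) × ↑(L.obj (op X))))
    (hε₂ : ∀ W X : C,
      Functor.prod' (L.map (coprod.inl : W ⟶ W ⨿ X).op).toFunctor (L.map (coprod.inr : X ⟶ W ⨿ X).op).toFunctor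
        ⋙ ε W X = 𝟭 (L.obj (op (W ⨿ X)))) :
    ∀ W X : C,
      Nonempty ((Functor.prod' (𝟭 (L.obj (op W)))
          ((Functor.const (L.obj (op W))).obj (⊥_ (L.obj (op X)))) ⋙ ε W X) ⊣
        ((L.map (coprod.inl : W ⟶ W ⨿ X).op).toFunctor : L.obj (op (W ⨿ X)) ⥤ L.obj (op W))) := by
  intro W X
  -- `ε W X` is an equivalence with inverse the pairing functor.
  let P := Functor.prod' (L.map (coprod.inl : W ⟶ W ⨿ X).op).toFunctor
    (L.map (coprod.inr : X ⟶ W ⨿ X).op).toFunctor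
  let e : (↑(L.obj (op W)) × ↑(L.obj (op X))) ≌ L.obj (op (W ⨿ X)) :=
    CategoryTheory.Equivalence.mk (ε W X) P (eqToIso (hε₁ W X).symm) (eqToIso (hε₂ W X))
  have adj2 : ε W X ⊣ P := e.toAdjunction
  have adj1 := prodInitialAdjFst (L.obj (op W)) (L.obj (op X))
  have adj := adj1.comp adj2
  exact ⟨adj.ofNatIsoRight (Functor.prod'CompFst _ _)⟩
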